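/- Let A be an m×n matrix and B an n×m matrix over a field F. Then the minimal polynomial of B·A divides X times the minimal polynomial of A·B, and the minimal polynomial of A·B divides X times the minimal polynomial of B·A (where X denotes the polynomial indeterminate). In particular, the minimal polynomials of AB and BA differ at most by a factor of X. -/
import Mathlib


open Matrix Polynomial

/-- The Drazin index of a square matrix: the smallest natural number `k`
such that `rank (A ^ k) = rank (A ^ (k+1))`. -/
noncomputable def drazinIndex {n : Type*} [Fintype n] [DecidableEq n]
    {F : Type*} [Field F] (A : Matrix n n F) : ℕ :=
  sInf {k : ℕ | (A ^ k).rank = (A ^ (k + 1)).rank}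

/-- `X` is the Drazin inverse of `A`:
`A^(k+1) * X = A^k`, `X * A * X = X`, `A * X = X * A` with `k = drazinIndex A`. -/
def IsDrazinInverse {n : Type*} [Fintype n] [DecidableEq n]
    {F : Type*} [Field F] (A X : Matrix n n F) : Prop :=
  A ^ (drazinIndex A + 1) * X = A ^ drazinIndex A ∧ X * A * X = X ∧ A * X = X * A

private lemma pow_semiconj {F : Type*} [Field F] {m n : ℕ}
    (A : Matrix (Fin m) (Fin n) F) (B : Matrix (Fin n) (Fin m) F) (k : ℕ) :
    B * (A * B) ^ k = (B * A) ^ k * B := by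
  induction k with
  | zero => simp
  | succ k ih =>
    rw [pow_succ, pow_succ, ← Matrix.mul_assoc, ih, Matrix.mul_assoc, Matrix.mul_assoc, Matrix.mul_assoc]

private lemma key {F : Type*} [Field F] {m n : ℕ}
    (A : Matrix (Fin m) (Fin n) F) (B : Matrix (Fin n) (Fin m) F) (p : F[X]) :
    B * (aeval (A * B) p) * A = aeval (B * A) p * (B * A) := by
  induction p using Polynomial.induction_on' with
  | add p q hp hq => rw [map_add, Matrix.mul_add, Matrix.add_mul, hp, hq, map_add, Matrix.add_mul]
  | monomial k a =>
    simp only [aeval_monomial, ← Algebra.smul_def, Matrix.mul_smul, Matrix.smul_mul]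
    rw [← Matrix.mul_assoc, pow_semiconj, Matrix.mul_assoc, ← pow_succ]

/-- For `A : m × n` and `B : n × m` over a field,
`ψ_{BA} ∣ X · ψ_{AB}` and `ψ_{AB} ∣ X · ψ_{BA}`. -/
theorem minpoly_mul_comm_dvd {F : Type*} [Field F] {m n : ℕ}
    (A : Matrix (Fin m) (Fin n) F) (B : Matrix (Fin n) (Fin m) F) :
    minpoly F (B * A) ∣ Polynomial.X * minpoly F (A * B) ∧
    minpoly F (A * B) ∣ Polynomial.X * minpoly F (B * A) := by
  constructor
  · apply minpoly.dvd
    rw [mul_comm, _root_.map_mul, aeval_X, ← key, minpoly.aeval]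
    simp
  · apply minpoly.dvd
    rw [mul_comm, _root_.map_mul, aeval_X, ← key, minpoly.aeval]
    simp
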